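/- Let 𝒜 be an abelian category in which every object is artinian, i.e., the partially ordered set of subobjects of every object satisfies the descending chain condition. Let ℬ be a full subcategory of 𝒜 containing the zero object and closed under subobjects, quotient objects, and finite direct sums. Then the inclusion functor ℱ : ℬ → 𝒜 admits a left adjoint 𝒢 : 𝒜 → ℬ which sends an object M of 𝒜 to its largest quotient lying in ℬ, and for every object M of 𝒜 the canonical adjunction morphism M → ℱ(𝒢(M)) is an epimorphism. -/

import Mathlib

open CategoryTheory CategoryTheory.Limits

/-- Let `𝒜` be an abelian category in which every object is artinian (the
poset of subobjects of every object satisfies the descending chain condition).  Let `ℬ` be a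
full subcategory of `𝒜` (given by a predicate `P` on objects) containing the zero object and
closed under subobjects, quotient objects and finite direct sums.  Then the inclusion functor
`ℱ : ℬ → 𝒜` admits a left adjoint `𝒢 : 𝒜 → ℬ` sending an object `M` to its largest quotient
lying in `ℬ`, and for every `M` the adjunction unit `M ⟶ ℱ(𝒢(M))` is an epimorphism.
(The fact that `𝒢 M` is the largest quotient of `M` lying in `ℬ` is expressed by the unit
being epic together with the universal property of the adjunction: every morphism — in
particular every epimorphism — from `M` to an object of `ℬ` factors uniquely through the
unit.) -/
theorem exists_leftAdjoint_largest_quotient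
    {𝒜 : Type*} [Category 𝒜] [Abelian 𝒜]
    (hart : ∀ X : 𝒜, WellFoundedLT (Subobject X))
    (P : 𝒜 → Prop)
    (hzero : ∀ X : 𝒜, IsZero X → P X)
    (hsub : ∀ {S M : 𝒜} (f : S ⟶ M), Mono f → P M → P S)
    (hquot : ∀ {M Q : 𝒜} (f : M ⟶ Q), Epi f → P M → P Q)
    (hsum : ∀ {M N : 𝒜}, P M → P N → P (M ⊞ N)) :
    ∃ (G : 𝒜 ⥤ ObjectProperty.FullSubcategory P) (adj : G ⊣ ObjectProperty.ι P),
      ∀ M : 𝒜, Epi (adj.unit.app M) := by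
  classical
  -- transfer of `P` along isomorphisms
  have hP_iso : ∀ {X Y : 𝒜} (e : X ≅ Y), P X → P Y := fun e h =>
    hsub e.inv inferInstance h
  -- key: the coimage of a map into an object of `ℬ` lies in `ℬ`
  have key : ∀ {M X : 𝒜} (f : M ⟶ X), P X → P (cokernel (kernelSubobject f).arrow) := by
    intro M X f hX
    have h1 : P (Abelian.image f) := hsub (Abelian.image.ι f) inferInstance hX
    have h2 : P (cokernel (kernel.ι f)) := hP_iso (Abelian.coimageIsoImage f).symm h1
    have e : cokernel ((kernelSubobject f).arrow) ≅ cokernel (kernel.ι f) := by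
      refine (cokernelIsoOfEq ?_).trans (cokernelEpiComp (kernelSubobjectIso f).hom (kernel.ι f))
      rw [kernelSubobject_arrow]
    exact hP_iso e.symm h2
  -- the set of subobjects whose quotient lies in `ℬ` is closed under `⊓`
  have inf_mem : ∀ {M : 𝒜} (N₁ N₂ : Subobject M), P (cokernel N₁.arrow) →
      P (cokernel N₂.arrow) → P (cokernel (N₁ ⊓ N₂).arrow) := by
    intro M N₁ N₂ h₁ h₂
    set f : M ⟶ cokernel N₁.arrow ⊞ cokernel N₂.arrow :=
      biprod.lift (cokernel.π N₁.arrow) (cokernel.π N₂.arrow) with hf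
    have hker : kernelSubobject f = N₁ ⊓ N₂ := by
      apply le_antisymm
      · apply le_inf
        · have hz : (kernelSubobject f).arrow ≫ cokernel.π N₁.arrow = 0 := by
            have h0 : (kernelSubobject f).arrow ≫ f ≫ biprod.fst = 0 := by
              rw [← Category.assoc, kernelSubobject_arrow_comp, zero_comp]
            simpa [hf] using h0
          exact Subobject.le_of_comm (Abelian.monoLift N₁.arrow _ hz)
            (Abelian.monoLift_comp _ _ _)
        · have hz : (kernelSubobject f).arrow ≫ cokernel.π N₂.arrow = 0 := by
            have h0 : (kernelSubobject f).arrow ≫ f ≫ biprod.snd = 0 := by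
              rw [← Category.assoc, kernelSubobject_arrow_comp, zero_comp]
            simpa [hf] using h0
          exact Subobject.le_of_comm (Abelian.monoLift N₂.arrow _ hz)
            (Abelian.monoLift_comp _ _ _)
      · apply le_kernelSubobject
        have c1 : (N₁ ⊓ N₂).arrow ≫ cokernel.π N₁.arrow = 0 := by
          rw [← Subobject.ofLE_arrow (inf_le_left : N₁ ⊓ N₂ ≤ N₁), Category.assoc,
            cokernel.condition, comp_zero]
        have c2 : (N₁ ⊓ N₂).arrow ≫ cokernel.π N₂.arrow = 0 := by
          rw [← Subobject.ofLE_arrow (inf_le_right : N₁ ⊓ N₂ ≤ N₂), Category.assoc,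
            cokernel.condition, comp_zero]
        apply biprod.hom_ext <;> simp [hf, c1, c2]
    rw [← hker]
    exact key f (hsum h₁ h₂)
  -- existence of the smallest subobject with quotient in `ℬ`
  have exK : ∀ M : 𝒜, ∃ K : Subobject M, P (cokernel K.arrow) ∧
      ∀ N : Subobject M, P (cokernel N.arrow) → K ≤ N := by
    intro M
    have htop : P (cokernel (⊤ : Subobject M).arrow) :=
      hzero _ ((isZero_zero 𝒜).of_iso (cokernel.ofEpi _))
    obtain ⟨K, hK, hmin⟩ := (hart M).wf.has_min {N | P (cokernel N.arrow)} ⟨⊤, htop⟩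
    refine ⟨K, hK, fun N hN => ?_⟩
    have hinf : P (cokernel ((K ⊓ N).arrow)) := inf_mem K N hK hN
    have heq : K ⊓ N = K :=
      (inf_le_left : K ⊓ N ≤ K).lt_or_eq.resolve_left (hmin _ hinf)
    exact heq ▸ inf_le_right
  choose K hK1 hK2 using exK
  -- the candidate left adjoint on objects
  let Gobj : 𝒜 → ObjectProperty.FullSubcategory P := fun M => ⟨cokernel (K M).arrow, hK1 M⟩
  -- the hom-set equivalence
  let e : ∀ (M : 𝒜) (B : ObjectProperty.FullSubcategory P),
      (Gobj M ⟶ B) ≃ (M ⟶ (ObjectProperty.ι P).obj B) := fun M B =>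
    { toFun := fun g => cokernel.π (K M).arrow ≫ g.hom
      invFun := fun f => ObjectProperty.homMk (cokernel.desc _ f (by
        have h := hK2 M (kernelSubobject f) (key f B.2)
        rw [← Subobject.ofLE_arrow h, Category.assoc, kernelSubobject_arrow_comp,
          comp_zero]))
      left_inv := fun g => by
        apply ObjectProperty.hom_ext
        apply (cancel_epi (cokernel.π (K M).arrow)).mp
        simp
      right_inv := fun f => cokernel.π_desc _ _ _ }
  have he : ∀ (X : 𝒜) (Y Y' : ObjectProperty.FullSubcategory P) (g : Y ⟶ Y') (h : Gobj X ⟶ Y),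
      e X Y' (h ≫ g) = e X Y h ≫ (ObjectProperty.ι P).map g := fun X Y Y' g h => (Category.assoc _ _ _).symm
  refine ⟨Adjunction.leftAdjointOfEquiv e he, Adjunction.adjunctionOfEquivLeft e he, fun M => ?_⟩
  have hu : (Adjunction.adjunctionOfEquivLeft e he).unit.app M
      = cokernel.π (K M).arrow ≫ 𝟙 (Gobj M).obj := by
    simp [Adjunction.adjunctionOfEquivLeft, Adjunction.mkOfHomEquiv, e]
  rw [hu]
  exact epi_comp _ _
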